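/- Let G be a finite simple graph and 𝒫 a collection of paths in G such that (G, 𝒫) is grid-like. Then the maximum degree of G is at most 4, i.e., every vertex of G is incident to at most 4 edges of G. -/

import Mathlib

open SimpleGraph

open scoped Classical in
private lemma aux_start {V : Type*} {G : SimpleGraph V} {v w : V} (p : G.Walk v w)
    (hp : p.IsPath) : (p.edges.filter (fun e => v ∈ e)).length ≤ 1 := by
  cases p with
  | nil => simp
  | cons h q =>
    rw [SimpleGraph.Walk.cons_isPath_iff] at hp
    have hq : q.edges.filter (fun e => v ∈ e) = [] := by
      rw [List.filter_eq_nil_iff]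
      intro e he hve
      simp only [decide_eq_true_eq] at hve
      induction e using Sym2.inductionOn with
      | hf a b =>
        rcases Sym2.mem_iff.1 hve with rfl | rfl
        · exact hp.2 (q.fst_mem_support_of_mem_edges he)
        · exact hp.2 (q.snd_mem_support_of_mem_edges he)
    rw [SimpleGraph.Walk.edges_cons, List.filter_cons]
    split
    · simp [hq]
    · simp [hq]

open scoped Classical in
private lemma aux_two {V : Type*} {G : SimpleGraph V} {u w : V} (p : G.Walk u w)
    (hp : p.IsPath) (v : V) : (p.edges.filter (fun e => v ∈ e)).length ≤ 2 := by
  by_cases hv : v ∈ p.support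
  · have hspec := SimpleGraph.Walk.take_spec p hv
    conv_lhs => rw [← hspec]
    rw [SimpleGraph.Walk.edges_append, List.filter_append, List.length_append]
    have h1 : ((p.takeUntil v hv).edges.filter (fun e => v ∈ e)).length ≤ 1 := by
      have := aux_start (p.takeUntil v hv).reverse (hp.takeUntil hv).reverse
      rwa [SimpleGraph.Walk.edges_reverse, List.filter_reverse, List.length_reverse] at this
    have h2 := aux_start (p.dropUntil v hv) (hp.dropUntil hv)
    omega
  · have : p.edges.filter (fun e => v ∈ e) = [] := by
      rw [List.filter_eq_nil_iff]
      intro e he hve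
      simp only [decide_eq_true_eq] at hve
      induction e using Sym2.inductionOn with
      | hf a b =>
        rcases Sym2.mem_iff.1 hve with rfl | rfl
        · exact hv (p.fst_mem_support_of_mem_edges he)
        · exact hv (p.snd_mem_support_of_mem_edges he)
    simp [this]

theorem stmt_1 {V : Type*} [Fintype V] (G : SimpleGraph V) [DecidableRel G.Adj]
    (Ps : Set (Σ u v : V, G.Walk u v))
    (hpath : ∀ P ∈ Ps, P.2.2.IsPath)
    (hcoverV : ∀ x : V, ∃ P ∈ Ps, x ∈ P.2.2.support)
    (hcoverE : ∀ e ∈ G.edgeSet, ∃ P ∈ Ps, e ∈ P.2.2.edges)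
    (htwo : ∀ P ∈ Ps, 2 ≤ P.2.2.support.length)
    (hbip : ∃ c : (Σ u v : V, G.Walk u v) → Bool,
      ∀ P ∈ Ps, ∀ Q ∈ Ps, P ≠ Q →
        (∃ x : V, x ∈ P.2.2.support ∧ x ∈ Q.2.2.support) → c P ≠ c Q) :
    ∀ v : V, G.degree v ≤ 4 := by
  classical
  intro v
  obtain ⟨c, hc⟩ := hbip
  set s := G.neighborFinset v with hs
  have key : ∀ w ∈ s, ∃ P ∈ Ps, s(v, w) ∈ P.2.2.edges := by
    intro w hw
    exact hcoverE s(v, w) (G.mem_edgeSet.2 ((G.mem_neighborFinset v w).1 hw))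
  have : Nonempty (Σ u v : V, G.Walk u v) := ⟨⟨v, v, SimpleGraph.Walk.nil⟩⟩
  choose! f hfP hfE using key
  -- v is in the support of every chosen path
  have hvsup : ∀ w ∈ s, v ∈ (f w).2.2.support :=
    fun w hw => (f w).2.2.fst_mem_support_of_mem_edges (hfE w hw)
  set T := s.image f with hT
  have hTcard : T.card ≤ 2 := by
    have hinj : Set.InjOn c T := by
      intro P hP Q hQ hcPQ
      by_contra hne
      obtain ⟨w1, hw1, rfl⟩ := Finset.mem_image.1 hP
      obtain ⟨w2, hw2, rfl⟩ := Finset.mem_image.1 hQ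
      exact hc _ (hfP w1 hw1) _ (hfP w2 hw2) hne
        ⟨v, hvsup w1 hw1, hvsup w2 hw2⟩ hcPQ
    calc T.card ≤ (Finset.univ : Finset Bool).card :=
          Finset.card_le_card_of_injOn c (fun _ _ => Finset.mem_univ _) hinj
      _ = 2 := by simp
  have hfiber : ∀ P ∈ T, (s.filter (fun w => f w = P)).card ≤ 2 := by
    intro P hP
    obtain ⟨w0, hw0, rfl⟩ := Finset.mem_image.1 hP
    have hPpath : (f w0).2.2.IsPath := hpath _ (hfP w0 hw0)
    have hbound : (((f w0).2.2.edges.filter (fun e => v ∈ e)).toFinset).card ≤ 2 := by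
      calc _ ≤ ((f w0).2.2.edges.filter (fun e => v ∈ e)).length :=
            List.toFinset_card_le _
        _ ≤ 2 := aux_two _ hPpath v
    refine le_trans (Finset.card_le_card_of_injOn (fun w => s(v, w))
      ?_ ?_) hbound
    · intro w hw
      simp only [Finset.coe_filter, Set.mem_setOf_eq, Finset.mem_filter, Finset.mem_coe] at hw ⊢
      rw [List.mem_toFinset, List.mem_filter]
      constructor
      · rw [← hw.2] at *; exact hfE w hw.1
      · simp
    · intro w1 hw1 w2 hw2 heq
      simp only [Finset.coe_filter, Set.mem_setOf_eq] at hw1 hw2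
      have h1 : v ≠ w1 := G.ne_of_adj ((G.mem_neighborFinset v w1).1 hw1.1)
      have h2 : v ≠ w2 := G.ne_of_adj ((G.mem_neighborFinset v w2).1 hw2.1)
      rcases Sym2.eq_iff.1 heq with ⟨-, h⟩ | ⟨h, -⟩
      · exact h
      · exact absurd h h2
  have hsum : s.card = ∑ P ∈ T, (s.filter (fun w => f w = P)).card :=
    Finset.card_eq_sum_card_fiberwise (fun w hw => Finset.mem_image_of_mem f hw)
  have : s.card ≤ 4 := by
    rw [hsum]
    calc ∑ P ∈ T, (s.filter (fun w => f w = P)).card ≤ ∑ _P ∈ T, 2 :=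
          Finset.sum_le_sum hfiber
      _ = T.card * 2 := by rw [Finset.sum_const, smul_eq_mul]
      _ ≤ 4 := by omega
  exact this
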